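/- Let R be a reduced crystallographic root system in a finite-dimensional real inner product space E, and let Σ ⊆ R be a Π-system: a linearly independent subset such that α − β ∉ R for all α, β ∈ Σ. Then ⟨α, β⟩ ≤ 0 for all distinct α, β ∈ Σ, and Σ is a base of the root system R(Σ) ⊆ R consisting of all images of elements of Σ under the group generated by the reflections s_β for β ∈ Σ: R(Σ) is a reduced crystallographic root system in the span of Σ, and every element of R(Σ) is an integer linear combination of elements of Σ with coefficients all nonnegative or all nonpositive. -/

import Mathlib

open scoped RealInnerProductSpace

/-- A reduced crystallographic root system in a real inner product space `E`:
a finite set of nonzero vectors, with integral Cartan numbers, closed under the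
reflections it defines, and such that the only multiples of a root `α` that are
roots are `±α`. -/
def IsRootSystem {E : Type*} [NormedAddCommGroup E] [InnerProductSpace ℝ E]
    (R : Set E) : Prop :=
  R.Finite ∧ (0 : E) ∉ R ∧
  (∀ α ∈ R, ∀ β ∈ R, ∃ n : ℤ, 2 * ⟪β, α⟫ / ⟪α, α⟫ = (n : ℝ)) ∧
  (∀ α ∈ R, ∀ β ∈ R, β - (2 * ⟪β, α⟫ / ⟪α, α⟫) • α ∈ R) ∧
  (∀ α ∈ R, ∀ t : ℝ, t • α ∈ R → t = 1 ∨ t = -1)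

/-- `S` is a base (simple system) of the root system `R`: a linearly independent
subset such that every root is an integer linear combination of elements of `S`
with coefficients all nonnegative or all nonpositive. -/
def IsBase {E : Type*} [NormedAddCommGroup E] [InnerProductSpace ℝ E]
    (R S : Set E) : Prop :=
  S ⊆ R ∧ LinearIndependent ℝ ((↑) : S → E) ∧
  ∀ β ∈ R, ∃ c : E →₀ ℤ, ↑c.support ⊆ S ∧
    β = c.sum (fun α n => (n : ℝ) • α) ∧
    ((∀ α, 0 ≤ c α) ∨ (∀ α, c α ≤ 0))

/-- The reflection `s_β : x ↦ x - (2⟪x,β⟫/⟪β,β⟫) β` in the hyperplane orthogonal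
to `β`, as an element of the monoid `Function.End E` of self-maps of `E`. -/
noncomputable def sRefl {E : Type*} [NormedAddCommGroup E] [InnerProductSpace ℝ E]
    (β : E) : Function.End E :=
  fun x => x - (2 * ⟪x, β⟫ / ⟪β, β⟫) • β

/-- The set of all images of elements of `Sg` under the group generated by the
reflections `s_β`, `β ∈ Sg` (since each reflection is an involution, this group
coincides with the generated monoid of self-maps). -/
noncomputable def subSystem {E : Type*} [NormedAddCommGroup E] [InnerProductSpace ℝ E]
    (Sg : Set E) : Set E :=
  {x | ∃ w ∈ Submonoid.closure (sRefl '' Sg), ∃ α ∈ Sg, x = w α}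

/-- `β` is an integer linear combination of elements of `S'` with all
coefficients nonnegative. -/
def IsNonnegCombo {E : Type*} [NormedAddCommGroup E] [InnerProductSpace ℝ E]
    (S' : Set E) (β : E) : Prop :=
  ∃ c : E →₀ ℤ, ↑c.support ⊆ S' ∧ β = c.sum (fun α n => (n : ℝ) • α) ∧ ∀ α, 0 ≤ c α

/-- The inverse root `α* = 2α/⟪α,α⟫`. -/
noncomputable def invRoot {E : Type*} [NormedAddCommGroup E] [InnerProductSpace ℝ E]
    (α : E) : E :=
  (2 / ⟪α, α⟫) • α
/-- A Π-system of the root system `R`: a linearly independent subset `Sg ⊆ R`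
such that `α - β` is not a root for all `α, β ∈ Sg`. -/
def IsPiSys {E : Type*} [NormedAddCommGroup E] [InnerProductSpace ℝ E]
    (R Sg : Set E) : Prop :=
  Sg ⊆ R ∧ LinearIndependent ℝ ((↑) : Sg → E) ∧ ∀ α ∈ Sg, ∀ β ∈ Sg, α - β ∉ R

section Aux
variable {E : Type*} [NormedAddCommGroup E] [InnerProductSpace ℝ E]

lemma inner_self_pos' {x : E} (hx : x ≠ 0) : 0 < ⟪x, x⟫ :=
  lt_of_le_of_ne real_inner_self_nonneg
    (fun h => hx (real_inner_self_nonpos.mp (le_of_eq h.symm)))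

lemma root_ne_zero {R : Set E} (hR : IsRootSystem R) {α : E} (hα : α ∈ R) : α ≠ 0 :=
  fun h => hR.2.1 (h ▸ hα)

lemma root_inner_self_pos {R : Set E} (hR : IsRootSystem R) {α : E} (hα : α ∈ R) :
    0 < ⟪α, α⟫ :=
  inner_self_pos' (root_ne_zero hR hα)

lemma root_neg_mem {R : Set E} (hR : IsRootSystem R) {α : E} (hα : α ∈ R) : -α ∈ R := by
  have h := hR.2.2.2.1 α hα α hα
  have hpos := root_inner_self_pos hR hα
  have he : α - (2 * ⟪α, α⟫ / ⟪α, α⟫) • α = -α := by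
    rw [mul_div_assoc, div_self hpos.ne', mul_one]
    module
  rwa [he] at h

lemma root_string {R : Set E} (hR : IsRootSystem R) {x β : E} (hx : x ∈ R) (hβ : β ∈ R)
    (hpos : 0 < ⟪x, β⟫) (h1 : x ≠ β) (h2 : x ≠ -β) : x - β ∈ R := by
  obtain ⟨m, hm⟩ := hR.2.2.1 β hβ x hx
  obtain ⟨n, hn⟩ := hR.2.2.1 x hx β hβ
  have hB := root_inner_self_pos hR hβ
  have hX := root_inner_self_pos hR hx
  have hnotprop : ∀ t : ℝ, x ≠ t • β := by
    intro t ht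
    rcases hR.2.2.2.2 β hβ t (ht ▸ hx) with h | h
    · exact h1 (by rw [ht, h, one_smul])
    · exact h2 (by rw [ht, h, neg_smul, one_smul])
  have hu : x - (⟪x, β⟫ / ⟪β, β⟫) • β ≠ 0 := by
    intro h
    exact hnotprop _ (by rw [sub_eq_zero] at h; exact h)
  have hexp : ⟪x - (⟪x, β⟫ / ⟪β, β⟫) • β, x - (⟪x, β⟫ / ⟪β, β⟫) • β⟫
      = ⟪x, x⟫ - ⟪x, β⟫ ^ 2 / ⟪β, β⟫ := by
    rw [real_inner_sub_sub_self, real_inner_smul_right, real_inner_smul_left,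
      real_inner_smul_right]
    field_simp
    ring
  have hcs : ⟪x, β⟫ ^ 2 < ⟪x, x⟫ * ⟪β, β⟫ := by
    have h0 : 0 < ⟪x, x⟫ - ⟪x, β⟫ ^ 2 / ⟪β, β⟫ := hexp ▸ inner_self_pos' hu
    have h1' : ⟪x, β⟫ ^ 2 / ⟪β, β⟫ < ⟪x, x⟫ := by linarith
    calc ⟪x, β⟫ ^ 2 = ⟪x, β⟫ ^ 2 / ⟪β, β⟫ * ⟪β, β⟫ := by field_simp
    _ < ⟪x, x⟫ * ⟪β, β⟫ := by exact mul_lt_mul_of_pos_right h1' hB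
  have hm1 : 1 ≤ m := by
    have : (0 : ℝ) < m := hm ▸ div_pos (by linarith) hB
    exact_mod_cast this
  have hn1 : 1 ≤ n := by
    have : (0 : ℝ) < n := hn ▸ div_pos (by rw [real_inner_comm]; linarith) hX
    exact_mod_cast this
  have hn' : 2 * ⟪x, β⟫ / ⟪x, x⟫ = (n : ℝ) := by rw [real_inner_comm β x]; exact hn
  have hprod : (m : ℝ) * n < 4 := by
    rw [← hm, ← hn', div_mul_div_comm, div_lt_iff₀ (by positivity)]
    nlinarith [hcs]
  have hmn : m = 1 ∨ n = 1 := by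
    by_contra hcon
    push_neg at hcon
    have h2m : (2 : ℝ) ≤ m := by exact_mod_cast (by omega : 2 ≤ m)
    have h2n : (2 : ℝ) ≤ n := by exact_mod_cast (by omega : 2 ≤ n)
    nlinarith
  rcases hmn with h | h
  · have := hR.2.2.2.1 β hβ x hx
    rwa [hm, h, Int.cast_one, one_smul] at this
  · have := hR.2.2.2.1 x hx β hβ
    rw [hn, h, Int.cast_one, one_smul] at this
    have := root_neg_mem hR this
    rwa [neg_sub] at this

end Aux

section Aux2
variable {E : Type*} [NormedAddCommGroup E] [InnerProductSpace ℝ E]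

lemma uniq_real {Sg : Set E} (hind : LinearIndependent ℝ ((↑) : Sg → E))
    {t : Finset E} (ht : ↑t ⊆ Sg) (f : E → ℝ)
    (h : ∑ a ∈ t, f a • a = 0) : ∀ a ∈ t, f a = 0 := by
  classical
  set l : E →₀ ℝ := ∑ a ∈ t, Finsupp.single a (f a) with hl
  have happ : ∀ b, l b = if b ∈ t then f b else 0 := by
    intro b
    rw [hl, Finsupp.finset_sum_apply]
    rw [Finset.sum_congr rfl (fun i _ => Finsupp.single_apply)]
    exact Finset.sum_ite_eq' t b f
  have hmem : l ∈ Finsupp.supported ℝ ℝ Sg := by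
    rw [Finsupp.mem_supported]
    intro b hb
    have hb' := Finsupp.mem_support_iff.mp hb
    rw [happ b] at hb'
    by_cases hbt : b ∈ t
    · exact ht hbt
    · simp [hbt] at hb'
  have hzero : (Finsupp.linearCombination ℝ id) l = 0 := by
    rw [hl, map_sum]
    simpa only [Finsupp.linearCombination_single, id] using h
  have hl0 := linearIndepOn_iff.mp (linearIndependent_subtype_iff.mp hind) l hmem hzero
  intro a ha
  have := Finsupp.ext_iff.mp hl0 a
  rwa [happ a, if_pos ha, Finsupp.coe_zero, Pi.zero_apply] at this

lemma rep_single {Sg : Set E} (hind : LinearIndependent ℝ ((↑) : Sg → E))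
    {c : E →₀ ℤ} (hsupp : ↑c.support ⊆ Sg)
    {α : E} (hα : α ∈ Sg) {ε : ℤ}
    (hsum : c.sum (fun a n => (n : ℝ) • a) = (ε : ℝ) • α) :
    c = Finsupp.single α ε := by
  classical
  set t : Finset E := insert α c.support with htdef
  have htSg : ↑t ⊆ Sg := by
    intro z hz
    rcases Finset.mem_insert.mp hz with h | h
    · exact h ▸ hα
    · exact hsupp h
  set f : E → ℝ := fun a => (c a : ℝ) - (if a = α then (ε : ℝ) else 0) with hf
  have hsum0 : ∑ a ∈ t, f a • a = 0 := by
    have h1 : ∑ a ∈ t, ((c a : ℝ)) • a = c.sum (fun a n => (n : ℝ) • a) := by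
      rw [Finsupp.sum]
      refine (Finset.sum_subset (Finset.subset_insert α _) ?_).symm
      intro z _ hznot
      rw [Finsupp.notMem_support_iff.mp hznot]
      simp
    have h2 : ∑ a ∈ t, (if a = α then (ε : ℝ) else 0) • a = (ε : ℝ) • α := by
      have : ∀ a ∈ t, (if a = α then (ε : ℝ) else 0) • a
          = (if a = α then (ε : ℝ) • α else 0) := by
        intro a _
        by_cases h : a = α <;> simp [h]
      rw [Finset.sum_congr rfl this, Finset.sum_ite_eq' t α (fun _ => (ε : ℝ) • α),
        if_pos (Finset.mem_insert_self α _)]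
    simp only [hf, sub_smul]
    rw [Finset.sum_sub_distrib, h1, h2, hsum, sub_self]
  have hz := uniq_real hind htSg f hsum0
  ext a
  by_cases hat : a ∈ t
  · have h0 := hz a hat
    simp only [hf] at h0
    by_cases haα : a = α
    · subst haα
      rw [if_pos rfl] at h0
      rw [Finsupp.single_eq_same]
      have : (c a : ℝ) = (ε : ℝ) := by linarith
      exact_mod_cast this
    · rw [if_neg haα] at h0
      rw [Finsupp.single_eq_of_ne' (fun h => haα h.symm)]
      have : (c a : ℝ) = 0 := by linarith
      exact_mod_cast this
  · have hns : a ∉ c.support := fun h => hat (Finset.mem_insert_of_mem h)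
    have haα : a ≠ α := fun h => hat (h ▸ Finset.mem_insert_self α _)
    rw [Finsupp.notMem_support_iff.mp hns, Finsupp.single_eq_of_ne' (fun h => haα h.symm)]

lemma pi_obtuse {R Sg : Set E} (hR : IsRootSystem R) (hSg : IsPiSys R Sg) :
    ∀ α ∈ Sg, ∀ β ∈ Sg, α ≠ β → ⟪α, β⟫ ≤ 0 := by
  intro α hα β hβ hne
  by_contra hpos
  push_neg at hpos
  have hne2 : α ≠ -β := by
    intro h
    rw [h, inner_neg_left] at hpos
    have := root_inner_self_pos hR (hSg.1 hβ)
    linarith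
  exact hSg.2.2 α hα β hβ (root_string hR (hSg.1 hα) (hSg.1 hβ) hpos hne hne2)

end Aux2

section Aux3
variable {E : Type*} [NormedAddCommGroup E] [InnerProductSpace ℝ E]

lemma sign_claim {R Sg : Set E} (hR : IsRootSystem R) (hSg : IsPiSys R Sg) :
    ∀ N : ℕ, ∀ x ∈ R, ∀ c : E →₀ ℤ, ↑c.support ⊆ Sg →
      x = c.sum (fun α n => (n : ℝ) • α) → (c.sum fun _ n => n.natAbs) = N →
      (∀ α, 0 ≤ c α) ∨ (∀ α, c α ≤ 0) := by
  intro N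
  induction N using Nat.strong_induction_on with
  | _ N IH =>
  intro x hx c hsupp hrep hN
  by_contra hbad
  push_neg at hbad
  obtain ⟨⟨a₀, ha₀⟩, ⟨a₁, ha₁⟩⟩ := hbad
  classical
  set s := c.support with hs
  set sp := s.filter (fun a => 0 < c a) with hsp
  set sn := s.filter (fun a => ¬ 0 < c a) with hsn
  have ha₁p : a₁ ∈ sp := Finset.mem_filter.mpr ⟨Finsupp.mem_support_iff.mpr (by omega), ha₁⟩
  have ha₀n : a₀ ∈ sn :=
    Finset.mem_filter.mpr ⟨Finsupp.mem_support_iff.mpr (by omega), by omega⟩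
  have hposp : ∀ a ∈ sp, 0 < c a := fun a ha => (Finset.mem_filter.mp ha).2
  have hnegn : ∀ a ∈ sn, c a < 0 := by
    intro a ha
    have h1 := (Finset.mem_filter.mp ha).2
    have h2 := Finsupp.mem_support_iff.mp (Finset.mem_filter.mp ha).1
    omega
  have hspSg : ∀ a ∈ sp, a ∈ Sg := fun a ha => hsupp (Finset.filter_subset _ _ ha)
  have hsnSg : ∀ a ∈ sn, a ∈ Sg := fun a ha => hsupp (Finset.filter_subset _ _ ha)
  have hspSg' : ↑sp ⊆ Sg := fun a ha => hspSg a (Finset.mem_coe.mp ha)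
  have hsnSg' : ↑sn ⊆ Sg := fun a ha => hsnSg a (Finset.mem_coe.mp ha)
  have hsplit : x = (∑ a ∈ sp, (c a : ℝ) • a) + ∑ a ∈ sn, (c a : ℝ) • a := by
    rw [hrep, Finsupp.sum]
    exact (Finset.sum_filter_add_sum_filter_not s _ _).symm
  have hcross : 0 ≤ ⟪∑ a ∈ sn, (c a : ℝ) • a, ∑ b ∈ sp, (c b : ℝ) • b⟫ := by
    rw [sum_inner]
    apply Finset.sum_nonneg
    intro a ha
    rw [real_inner_smul_left, inner_sum]
    have hterm : ∑ b ∈ sp, ⟪a, (c b : ℝ) • b⟫ ≤ 0 := by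
      apply Finset.sum_nonpos
      intro b hb
      rw [real_inner_smul_right]
      have hab : a ≠ b := by
        intro h
        subst h
        exact absurd (hposp _ hb) (by have := hnegn _ ha; omega)
      have hobt := pi_obtuse hR hSg a (hsnSg a ha) b (hspSg b hb) hab
      exact mul_nonpos_of_nonneg_of_nonpos (by exact_mod_cast (hposp _ hb).le) hobt
    have hca : ((c a : ℤ) : ℝ) ≤ 0 := by exact_mod_cast (hnegn _ ha).le
    nlinarith [hterm, hca]
  have hxpos_ne : (∑ a ∈ sp, (c a : ℝ) • a) ≠ 0 := by
    intro h0
    have h1 := uniq_real hSg.2.1 hspSg' (fun a => (c a : ℝ)) h0 a₁ ha₁p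
    have : c a₁ = 0 := by exact_mod_cast (by simpa using h1 : ((c a₁ : ℤ) : ℝ) = 0)
    omega
  have hxneg_ne : (∑ a ∈ sn, (c a : ℝ) • a) ≠ 0 := by
    intro h0
    have h1 := uniq_real hSg.2.1 hsnSg' (fun a => (c a : ℝ)) h0 a₀ ha₀n
    have : c a₀ = 0 := by exact_mod_cast (by simpa using h1 : ((c a₀ : ℤ) : ℝ) = 0)
    omega
  -- extract α with positive coefficient and positive inner product with x
  obtain ⟨α, hαsp, hα1⟩ : ∃ b ∈ sp, 0 < (c b : ℝ) * ⟪x, b⟫ := by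
    by_contra hno
    push_neg at hno
    have hsumle : ∑ b ∈ sp, (c b : ℝ) * ⟪x, b⟫ ≤ 0 := Finset.sum_nonpos hno
    have h1 : ⟪x, ∑ b ∈ sp, (c b : ℝ) • b⟫ = ∑ b ∈ sp, (c b : ℝ) * ⟪x, b⟫ := by
      rw [inner_sum]
      exact Finset.sum_congr rfl (fun b _ => real_inner_smul_right _ _ _)
    have h2 : 0 < ⟪x, ∑ b ∈ sp, (c b : ℝ) • b⟫ := by
      rw [hsplit, inner_add_left]
      have := inner_self_pos' hxpos_ne
      linarith
    linarith [h1 ▸ h2]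
  -- extract β₀ with negative coefficient and negative inner product with x
  obtain ⟨β₀, hβn, hβ1⟩ : ∃ b ∈ sn, 0 < (c b : ℝ) * ⟪x, b⟫ := by
    by_contra hno
    push_neg at hno
    have hsumle : ∑ b ∈ sn, (c b : ℝ) * ⟪x, b⟫ ≤ 0 := Finset.sum_nonpos hno
    have h1 : ⟪x, ∑ b ∈ sn, (c b : ℝ) • b⟫ = ∑ b ∈ sn, (c b : ℝ) * ⟪x, b⟫ := by
      rw [inner_sum]
      exact Finset.sum_congr rfl (fun b _ => real_inner_smul_right _ _ _)
    have h2 : 0 < ⟪x, ∑ b ∈ sn, (c b : ℝ) • b⟫ := by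
      rw [hsplit, inner_add_left]
      have h3 := inner_self_pos' hxneg_ne
      have h4 : ⟪∑ a ∈ sp, (c a : ℝ) • a, ∑ b ∈ sn, (c b : ℝ) • b⟫ ≥ 0 := by
        rw [real_inner_comm]
        exact hcross
      linarith
    linarith [h1 ▸ h2]
  have hαSg : α ∈ Sg := hspSg _ hαsp
  have hβSg : β₀ ∈ Sg := hsnSg _ hβn
  have hcα : 0 < c α := hposp _ hαsp
  have hcβ : c β₀ < 0 := hnegn _ hβn
  have hxα : 0 < ⟪x, α⟫ := by
    rcases mul_pos_iff.mp hα1 with ⟨_, h⟩ | ⟨h, _⟩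
    · exact h
    · exact absurd h (by push_neg; exact_mod_cast hcα.le)
  have hxβ : ⟪x, β₀⟫ < 0 := by
    rcases mul_pos_iff.mp hβ1 with ⟨h, _⟩ | ⟨_, h⟩
    · exact absurd h (by push_neg; exact_mod_cast hcβ.le)
    · exact h
  have hαβ : α ≠ β₀ := fun h => by rw [h] at hcα; omega
  -- x is not ±α, ±β₀
  have hxa : x ≠ α := by
    intro h
    have hc1 : c = Finsupp.single α 1 :=
      rep_single hSg.2.1 hsupp hαSg (by rw [← hrep, h]; simp)
    rw [hc1, Finsupp.single_apply] at ha₀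
    split at ha₀ <;> omega
  have hxa' : x ≠ -α := by
    intro h
    have hc1 : c = Finsupp.single α (-1) :=
      rep_single hSg.2.1 hsupp hαSg (by rw [← hrep, h]; simp)
    rw [hc1, Finsupp.single_apply] at ha₁
    split at ha₁ <;> omega
  have hxb : x ≠ β₀ := by
    intro h
    have hc1 : c = Finsupp.single β₀ 1 :=
      rep_single hSg.2.1 hsupp hβSg (by rw [← hrep, h]; simp)
    rw [hc1, Finsupp.single_eq_same] at hcβ
    omega
  have hxb' : x ≠ -β₀ := by
    intro h
    have hc1 : c = Finsupp.single β₀ (-1) :=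
      rep_single hSg.2.1 hsupp hβSg (by rw [← hrep, h]; simp)
    rw [hc1, Finsupp.single_apply] at hcα
    split at hcα <;> omega
  -- first string step : x - α
  have hy₁ : x - α ∈ R := root_string hR hx (hSg.1 hαSg) hxα hxa hxa'
  set c₁ := c - Finsupp.single α 1 with hc₁
  have hc₁app : ∀ i, c₁ i = c i - (if α = i then 1 else 0) := by
    intro i
    rw [hc₁, Finsupp.sub_apply, Finsupp.single_apply]
  have hsupp₁ : ↑c₁.support ⊆ Sg := by
    intro z hz
    have hz' := Finset.mem_coe.mp hz
    have := Finsupp.support_sub (f := c) (g := Finsupp.single α 1) hz'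
    rcases Finset.mem_union.mp this with h | h
    · exact hsupp h
    · have := Finsupp.support_single_subset h
      rw [Finset.mem_singleton] at this
      exact this ▸ hαSg
  have hrep₁ : x - α = c₁.sum (fun a n => (n : ℝ) • a) := by
    rw [hc₁, Finsupp.sum_sub_index (by intro a b₁ b₂; push_cast; rw [sub_smul])]
    rw [Finsupp.sum_single_index (by simp)]
    rw [← hrep]
    simp
  have hΦ₁ : (c₁.sum fun _ n => n.natAbs) < N := by
    have hsub1 : c₁.support ⊆ insert α s := by
      intro z hz
      have := Finsupp.support_sub (f := c) (g := Finsupp.single α 1) hz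
      rcases Finset.mem_union.mp this with h | h
      · exact Finset.mem_insert_of_mem h
      · have := Finsupp.support_single_subset h
        rw [Finset.mem_singleton] at this
        exact this ▸ Finset.mem_insert_self _ _
    have e1 : (c₁.sum fun _ n => n.natAbs) = ∑ a ∈ insert α s, (c₁ a).natAbs :=
      Finsupp.sum_of_support_subset _ hsub1 _ (by simp)
    have e2 : N = ∑ a ∈ insert α s, (c a).natAbs := by
      rw [← hN]
      exact Finsupp.sum_of_support_subset _ (Finset.subset_insert _ _) _ (by simp)
    rw [e1, e2]
    apply Finset.sum_lt_sum
    · intro i _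
      rw [hc₁app i]
      by_cases h : α = i
      · subst h; rw [if_pos rfl]; omega
      · rw [if_neg h]; omega
    · refine ⟨α, Finset.mem_insert_self _ _, ?_⟩
      rw [hc₁app α, if_pos rfl]
      omega
  rcases IH _ hΦ₁ (x - α) hy₁ c₁ hsupp₁ hrep₁ rfl with hP1 | hN1
  · -- c₁ nonneg : contradiction with c a₀ < 0
    have := hP1 a₀
    rw [hc₁app a₀] at this
    split at this <;> omega
  -- c₁ nonpos : c α = 1 and all other coords ≤ 0
  have hshape1 : ∀ a, a ≠ α → c a ≤ 0 := by
    intro a ha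
    have := hN1 a
    rw [hc₁app a, if_neg (fun h => ha h.symm)] at this
    omega
  have hcα1 : c α = 1 := by
    have := hN1 α
    rw [hc₁app α, if_pos rfl] at this
    omega
  -- second string step : x + β₀
  have hnegβ : -β₀ ∈ R := root_neg_mem hR (hSg.1 hβSg)
  have hy₂ : x + β₀ ∈ R := by
    have h := root_string hR hx hnegβ (by rw [inner_neg_right]; linarith)
      hxb' (by rw [neg_neg]; exact hxb)
    rwa [sub_neg_eq_add] at h
  set c₂ := c + Finsupp.single β₀ 1 with hc₂
  have hc₂app : ∀ i, c₂ i = c i + (if β₀ = i then 1 else 0) := by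
    intro i
    rw [hc₂, Finsupp.add_apply, Finsupp.single_apply]
  have hsupp₂ : ↑c₂.support ⊆ Sg := by
    intro z hz
    have hz' := Finset.mem_coe.mp hz
    have := Finsupp.support_add (g₁ := c) (g₂ := Finsupp.single β₀ 1) hz'
    rcases Finset.mem_union.mp this with h | h
    · exact hsupp h
    · have := Finsupp.support_single_subset h
      rw [Finset.mem_singleton] at this
      exact this ▸ hβSg
  have hrep₂ : x + β₀ = c₂.sum (fun a n => (n : ℝ) • a) := by
    rw [hc₂, Finsupp.sum_add_index' (by simp) (by intro a b₁ b₂; push_cast; rw [add_smul])]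
    rw [Finsupp.sum_single_index (by simp)]
    rw [← hrep]
    simp
  have hΦ₂ : (c₂.sum fun _ n => n.natAbs) < N := by
    have hsub2 : c₂.support ⊆ insert β₀ s := by
      intro z hz
      have := Finsupp.support_add (g₁ := c) (g₂ := Finsupp.single β₀ 1) hz
      rcases Finset.mem_union.mp this with h | h
      · exact Finset.mem_insert_of_mem h
      · have := Finsupp.support_single_subset h
        rw [Finset.mem_singleton] at this
        exact this ▸ Finset.mem_insert_self _ _
    have e1 : (c₂.sum fun _ n => n.natAbs) = ∑ a ∈ insert β₀ s, (c₂ a).natAbs :=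
      Finsupp.sum_of_support_subset _ hsub2 _ (by simp)
    have e2 : N = ∑ a ∈ insert β₀ s, (c a).natAbs := by
      rw [← hN]
      exact Finsupp.sum_of_support_subset _ (Finset.subset_insert _ _) _ (by simp)
    rw [e1, e2]
    apply Finset.sum_lt_sum
    · intro i _
      rw [hc₂app i]
      by_cases h : β₀ = i
      · subst h; rw [if_pos rfl]; omega
      · rw [if_neg h]; omega
    · refine ⟨β₀, Finset.mem_insert_self _ _, ?_⟩
      rw [hc₂app β₀, if_pos rfl]
      omega
  rcases IH _ hΦ₂ (x + β₀) hy₂ c₂ hsupp₂ hrep₂ rfl with hP2 | hN2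
  · -- c₂ nonneg : all coords ≥ 0 except c β₀ = -1
    have hshape2 : ∀ a, a ≠ β₀ → 0 ≤ c a := by
      intro a ha
      have := hP2 a
      rw [hc₂app a, if_neg (fun h => ha h.symm)] at this
      omega
    have hcβ1 : c β₀ = -1 := by
      have := hP2 β₀
      rw [hc₂app β₀, if_pos rfl] at this
      omega
    -- now c is supported on {α, β₀} with c α = 1, c β₀ = -1, so x = α - β₀ ∈ R, contra Π
    have hsupset : c.support ⊆ {α, β₀} := by
      intro a ha
      have hne := Finsupp.mem_support_iff.mp ha
      by_contra hmem
      rw [Finset.mem_insert, Finset.mem_singleton] at hmem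
      push_neg at hmem
      have h1 := hshape1 a hmem.1
      have h2 := hshape2 a hmem.2
      omega
    have hxval : x = α - β₀ := by
      have h0 : x = ∑ a ∈ ({α, β₀} : Finset E), (c a : ℝ) • a :=
        hrep.trans (Finsupp.sum_of_support_subset _ hsupset _ (by simp))
      rw [Finset.sum_pair hαβ, hcα1, hcβ1] at h0
      rw [h0]
      push_cast
      module
    exact hSg.2.2 α hαSg β₀ hβSg (hxval ▸ hx)
  · -- c₂ nonpos : contradiction at α
    have := hN2 α
    rw [hc₂app α] at this
    split at this <;> omega

end Aux3

section Aux4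
variable {E : Type*} [NormedAddCommGroup E] [InnerProductSpace ℝ E]

lemma sRefl_apply (β x : E) : sRefl β x = x - (2 * ⟪x, β⟫ / ⟪β, β⟫) • β := rfl

lemma sRefl_inner (β x y : E) : ⟪sRefl β x, sRefl β y⟫ = ⟪x, y⟫ := by
  by_cases hβ : β = 0
  · simp [sRefl_apply, hβ]
  · have hB : ⟪β, β⟫ ≠ 0 := (inner_self_pos' hβ).ne'
    simp only [sRefl_apply, inner_sub_left, inner_sub_right, real_inner_smul_left,
      real_inner_smul_right]
    rw [real_inner_comm y β]
    field_simp
    ring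

lemma sRefl_linear (β : E) (a : ℝ) (x y : E) :
    sRefl β (a • x + y) = a • sRefl β x + sRefl β y := by
  simp only [sRefl_apply, inner_add_left, real_inner_smul_left]
  match_scalars <;> ring

lemma sRefl_invol (β : E) : sRefl β * sRefl β = 1 := by
  funext x
  by_cases hβ : β = 0
  · show sRefl β (sRefl β x) = x
    simp [sRefl_apply, hβ]
  · have hB : ⟪β, β⟫ ≠ 0 := (inner_self_pos' hβ).ne'
    show sRefl β (sRefl β x) = x
    have h1 : ⟪sRefl β x, β⟫ = -⟪x, β⟫ := by
      rw [sRefl_apply, inner_sub_left, real_inner_smul_left]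
      field_simp
      ring
    rw [sRefl_apply (x := sRefl β x), h1, sRefl_apply]
    match_scalars <;> ring

lemma closure_nice {R Sg : Set E} (hR : IsRootSystem R) (hSg : IsPiSys R Sg) :
    ∀ w ∈ Submonoid.closure (sRefl '' Sg),
      (∀ x ∈ R, w x ∈ R) ∧ (∀ x y, ⟪w x, w y⟫ = ⟪x, y⟫) ∧
      (∀ (a : ℝ) (x y : E), w (a • x + y) = a • w x + w y) ∧
      (∀ x ∈ R, (∃ c : E →₀ ℤ, ↑c.support ⊆ Sg ∧ x = c.sum (fun α n => (n : ℝ) • α)) →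
        ∃ c : E →₀ ℤ, ↑c.support ⊆ Sg ∧ w x = c.sum (fun α n => (n : ℝ) • α)) := by
  classical
  intro w hw
  induction hw using Submonoid.closure_induction with
  | mem f hf =>
    obtain ⟨β, hβ, rfl⟩ := hf
    refine ⟨fun x hx => hR.2.2.2.1 β (hSg.1 hβ) x hx, sRefl_inner β, sRefl_linear β, ?_⟩
    rintro x hx ⟨c, hcs, hcr⟩
    obtain ⟨n, hn⟩ := hR.2.2.1 β (hSg.1 hβ) x hx
    refine ⟨c - Finsupp.single β n, ?_, ?_⟩
    · intro z hz
      have hz' := Finset.mem_coe.mp hz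
      have := Finsupp.support_sub (f := c) (g := Finsupp.single β n) hz'
      rcases Finset.mem_union.mp this with h | h
      · exact hcs h
      · have := Finsupp.support_single_subset h
        rw [Finset.mem_singleton] at this
        exact this ▸ hβ
    · rw [Finsupp.sum_sub_index (by intro a b₁ b₂; push_cast; rw [sub_smul])]
      rw [Finsupp.sum_single_index (by simp), ← hcr, sRefl_apply, hn]
  | one =>
    exact ⟨fun x hx => hx, fun x y => rfl, fun a x y => rfl,
      fun x _ h => h⟩
  | mul f g hf hg ihf ihg =>
    obtain ⟨hfR, hfI, hfL, hfC⟩ := ihf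
    obtain ⟨hgR, hgI, hgL, hgC⟩ := ihg
    refine ⟨fun x hx => hfR _ (hgR x hx), fun x y => (hfI _ _).trans (hgI x y),
      fun a x y => ?_, fun x hx hc => hfC _ (hgR x hx) (hgC x hx hc)⟩
    show f (g (a • x + y)) = a • f (g x) + f (g y)
    rw [hgL, hfL]

lemma closure_inv {Sg : Set E} :
    ∀ w ∈ Submonoid.closure (sRefl '' Sg),
      ∃ v ∈ Submonoid.closure (sRefl '' Sg), w * v = 1 ∧ v * w = 1 := by
  intro w hw
  induction hw using Submonoid.closure_induction with
  | mem f hf =>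
    obtain ⟨β, hβ, rfl⟩ := hf
    exact ⟨sRefl β, Submonoid.subset_closure ⟨β, hβ, rfl⟩, sRefl_invol β, sRefl_invol β⟩
  | one => exact ⟨1, Submonoid.one_mem _, one_mul 1, one_mul 1⟩
  | mul f g hf hg ihf ihg =>
    obtain ⟨vf, hvf, hvf1, hvf2⟩ := ihf
    obtain ⟨vg, hvg, hvg1, hvg2⟩ := ihg
    refine ⟨vg * vf, mul_mem hvg hvf, ?_, ?_⟩
    · calc f * g * (vg * vf) = f * (g * vg) * vf := by rw [mul_assoc, mul_assoc, mul_assoc]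
      _ = f * vf := by rw [hvg1, mul_one]
      _ = 1 := hvf1
    · calc vg * vf * (f * g) = vg * (vf * f) * g := by rw [mul_assoc, mul_assoc, mul_assoc]
      _ = vg * g := by rw [hvf2, mul_one]
      _ = 1 := hvg2

end Aux4

/-- If `Sg` is a Π-system of `R`, then distinct elements of `Sg` have nonpositive
inner products, and `Sg` is a base of the root subsystem `R(Sg)` (all images of
`Sg` under the group generated by the reflections in elements of `Sg`): `R(Sg)`
is a reduced crystallographic root system contained in `R`, lying in the span of
`Sg`, and every element of `R(Sg)` is an integer linear combination of elements
of `Sg` with coefficients all nonnegative or all nonpositive. -/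
theorem piSystem_is_base_of_subSystem
    {E : Type*} [NormedAddCommGroup E] [InnerProductSpace ℝ E] [FiniteDimensional ℝ E]
    (R : Set E) (hR : IsRootSystem R)
    (Sg : Set E) (hSg : IsPiSys R Sg) :
    (∀ α ∈ Sg, ∀ β ∈ Sg, α ≠ β → ⟪α, β⟫ ≤ 0) ∧
    IsRootSystem (subSystem Sg) ∧
    subSystem Sg ⊆ R ∧
    subSystem Sg ⊆ (Submodule.span ℝ Sg : Set E) ∧
    IsBase (subSystem Sg) Sg := by
  have hobt := pi_obtuse hR hSg
  have hnice := closure_nice hR hSg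
  have hsubR : subSystem Sg ⊆ R := by
    rintro x ⟨w, hw, α, hα, rfl⟩
    exact (hnice w hw).1 α (hSg.1 hα)
  have hrepex : ∀ x ∈ subSystem Sg, ∃ c : E →₀ ℤ, ↑c.support ⊆ Sg ∧
      x = c.sum (fun α n => (n : ℝ) • α) := by
    rintro x ⟨w, hw, α, hα, rfl⟩
    refine (hnice w hw).2.2.2 α (hSg.1 hα) ⟨Finsupp.single α 1, ?_, ?_⟩
    · intro z hz
      have := Finsupp.support_single_subset (Finset.mem_coe.mp hz)
      rw [Finset.mem_singleton] at this
      exact this ▸ hα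
    · rw [Finsupp.sum_single_index (by simp)]
      simp
  have hspan : subSystem Sg ⊆ (Submodule.span ℝ Sg : Set E) := by
    intro x hxm
    obtain ⟨c, hcs, hcr⟩ := hrepex x hxm
    rw [hcr]
    exact Submodule.sum_mem _ (fun a ha => Submodule.smul_mem _ _
      (Submodule.subset_span (hcs ha)))
  have hSgSub : Sg ⊆ subSystem Sg := fun α hα => ⟨1, Submonoid.one_mem _, α, hα, rfl⟩
  have hreflcl : ∀ u ∈ subSystem Sg, ∀ v ∈ subSystem Sg,
      v - (2 * ⟪v, u⟫ / ⟪u, u⟫) • u ∈ subSystem Sg := by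
    rintro u ⟨w, hw, α, hα, rfl⟩ v ⟨w', hw', α', hα', rfl⟩
    obtain ⟨wi, hwi, hw1, hw2⟩ := closure_inv w hw
    refine ⟨w * (sRefl α * (wi * w')), ?_, α', hα', ?_⟩
    · exact mul_mem hw (mul_mem (Submonoid.subset_closure ⟨α, hα, rfl⟩) (mul_mem hwi hw'))
    · have hlin := (hnice w hw).2.2.1
      have hip := (hnice w hw).2.1
      have hz1 : w (wi (w' α')) = w' α' := congrFun hw1 (w' α')
      have hcomp : (w * (sRefl α * (wi * w'))) α' = w (sRefl α (wi (w' α'))) := rfl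
      have hsub : ∀ (t : ℝ) (p q : E), w (p - t • q) = w p - t • w q := by
        intro t p q
        have h := hlin (-t) q p
        have e1 : (-t) • q + p = p - t • q := by module
        have e2 : (-t) • w q + w p = w p - t • w q := by module
        rw [e1] at h
        rw [h, e2]
      have h1 : ⟪wi (w' α'), α⟫ = ⟪w' α', w α⟫ := by rw [← hip (wi (w' α')) α, hz1]
      rw [hcomp, sRefl_apply, hsub, h1, hip α α, hz1]
  refine ⟨hobt, ⟨hR.1.subset hsubR, fun h => hR.2.1 (hsubR h),
    fun u hu v hv => hR.2.2.1 u (hsubR hu) v (hsubR hv),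
    hreflcl,
    fun u hu t ht => hR.2.2.2.2 u (hsubR hu) t (hsubR ht)⟩,
    hsubR, hspan, hSgSub, hSg.2.1, ?_⟩
  intro β hβ
  obtain ⟨c, hcs, hcr⟩ := hrepex β hβ
  exact ⟨c, hcs, hcr, sign_claim hR hSg _ β (hsubR hβ) c hcs hcr rfl⟩
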